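/- For every positive integer r there exists a positive integer m such that the decimal representation of 5^m contains at least r consecutive zero digits. -/

import Mathlib

theorem pow_five_has_consecutive_zeros (r : ℕ) (hr : 0 < r) :
    ∃ m : ℕ, 0 < m ∧ ∃ j : ℕ,
      (∀ i : ℕ, j ≤ i → i < j + r → 5 ^ m / 10 ^ i % 10 = 0) ∧
      10 ^ (j + r) ≤ 5 ^ m := by
  set k := 4 * r with hk
  have hk0 : 0 < k := by omega
  set m := k + k * 2 ^ (k - 1) with hm
  have hm2k : 2 * k ≤ m := by
    have : k ≤ k * 2 ^ (k - 1) := Nat.le_mul_of_pos_right k (Nat.pow_pos (by norm_num))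
    omega
  -- Euler: 5 ^ (2^(k-1)) ≡ 1 [MOD 2^k]
  have hcop : Nat.Coprime 5 (2 ^ k) := by
    refine Nat.Coprime.pow_right _ (by norm_num)
  have htot : Nat.totient (2 ^ k) = 2 ^ (k - 1) := by
    rw [Nat.totient_prime_pow Nat.prime_two hk0]
    simp
  have heuler : 5 ^ (2 ^ (k - 1)) ≡ 1 [MOD 2 ^ k] := by
    rw [← htot]; exact Nat.ModEq.pow_totient hcop
  have heuler2 : 5 ^ (k * 2 ^ (k - 1)) ≡ 1 [MOD 2 ^ k] := by
    have he : 5 ^ (k * 2 ^ (k - 1)) = (5 ^ 2 ^ (k - 1)) ^ k := by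
      rw [mul_comm, pow_mul]
    rw [he]
    calc (5 ^ 2 ^ (k - 1)) ^ k ≡ 1 ^ k [MOD 2 ^ k] := heuler.pow k
      _ = 1 := one_pow k
  -- 5^m ≡ 5^k [MOD 10^k]
  have hmod : 5 ^ m ≡ 5 ^ k [MOD 10 ^ k] := by
    have h10 : (10 : ℕ) ^ k = 5 ^ k * 2 ^ k := by
      rw [← Nat.mul_pow]
    rw [hm, pow_add, h10]
    calc 5 ^ k * 5 ^ (k * 2 ^ (k - 1)) ≡ 5 ^ k * 1 [MOD 5 ^ k * 2 ^ k] :=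
          heuler2.mul_left' (c := 5 ^ k)
      _ = 5 ^ k := mul_one _
  -- 5^k < 10^(3r)
  have hsmall : 5 ^ k < 10 ^ (3 * r) := by
    have h1 : (5 : ℕ) ^ r < 2 ^ (3 * r) := by
      calc (5 : ℕ) ^ r < 8 ^ r := Nat.pow_lt_pow_left (by norm_num) hr.ne'
        _ = 2 ^ (3 * r) := by rw [pow_mul]; norm_num
    calc (5 : ℕ) ^ k = 5 ^ (3 * r) * 5 ^ r := by rw [← pow_add, hk]; ring_nf
      _ < 5 ^ (3 * r) * 2 ^ (3 * r) := by gcongr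
      _ = 10 ^ (3 * r) := by rw [← Nat.mul_pow]
  have hmodk : 5 ^ m % 10 ^ k = 5 ^ k := by
    have : 5 ^ k % 10 ^ k = 5 ^ k := Nat.mod_eq_of_lt (by
      calc (5:ℕ) ^ k < 10 ^ (3 * r) := hsmall
        _ ≤ 10 ^ k := Nat.pow_le_pow_right (by norm_num) (by omega))
    rw [← this]
    exact hmod
  refine ⟨m, by positivity, 3 * r, ?_, ?_⟩
  · intro i hi1 hi2
    have hik : i < k := by omega
    have h10i : 5 ^ k < 10 ^ i :=
      lt_of_lt_of_le hsmall (Nat.pow_le_pow_right (by norm_num) hi1)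
    -- decompose 5^m
    have hdecomp : 5 ^ m = 5 ^ k + (10 ^ (k - i) * (5 ^ m / 10 ^ k)) * 10 ^ i := by
      have := Nat.div_add_mod (5 ^ m) (10 ^ k)
      rw [hmodk] at this
      have hpow : 10 ^ (k - i) * 10 ^ i = 10 ^ k := by
        rw [← pow_add]; congr 1; omega
      calc 5 ^ m = 10 ^ k * (5 ^ m / 10 ^ k) + 5 ^ k := by omega
        _ = 5 ^ k + (10 ^ (k - i) * (5 ^ m / 10 ^ k)) * 10 ^ i := by
            rw [mul_assoc, mul_comm (5 ^ m / 10 ^ k) (10 ^ i), ← mul_assoc, hpow]; ring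
    rw [hdecomp, Nat.add_mul_div_right _ _ (Nat.pow_pos (by norm_num)),
      Nat.div_eq_of_lt h10i, zero_add]
    have : (10 : ℕ) ∣ 10 ^ (k - i) * (5 ^ m / 10 ^ k) :=
      Dvd.dvd.mul_right (dvd_pow_self 10 (by omega)) _
    omega
  · have : 3 * r + r = k := by omega
    rw [this]
    calc (10 : ℕ) ^ k ≤ 25 ^ k := Nat.pow_le_pow_left (by norm_num) k
      _ = (5 ^ 2) ^ k := by norm_num
      _ = 5 ^ (2 * k) := (pow_mul 5 2 k).symm
      _ ≤ 5 ^ m := Nat.pow_le_pow_right (by norm_num) hm2k
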